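/- For every u in the upper half-plane ℂ₊ with u ≠ u₀, there exist R > 1 and ξ ∈ ℝ such that u = √3·i·(R·e^{iξ} − 1)/(1 − R²) + u₀; moreover R = |u − conj(u₀)| / |u − u₀|. -/

import Mathlib

/-- The point `u₀ = (1 + √3 i)/2`. -/
noncomputable def u0 : ℂ := (1 + Real.sqrt 3 * Complex.I) / 2

/-- every `u ∈ ℂ₊ \ {u₀}` can be written as
`u = √3 i (R e^{iξ} − 1)/(1 − R²) + u₀` with `R > 1`, `ξ ∈ ℝ`, and necessarily
`R = |u − conj u₀| / |u − u₀|`. -/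
theorem parametrization_upper_half_plane (u : ℂ) (hu : 0 < u.im) (hne : u ≠ u0) :
    ∃ R ξ : ℝ, 1 < R ∧
      u = (Real.sqrt 3 : ℂ) * Complex.I * ((R : ℂ) * Complex.exp (Complex.I * (ξ : ℂ)) - 1)
            / (1 - (R : ℂ) ^ 2) + u0 ∧
      R = ‖u - (starRingEnd ℂ) u0‖ / ‖u - u0‖ := by
  set a : ℝ := Real.sqrt 3 with ha
  have ha0 : (0:ℝ) < a := Real.sqrt_pos.mpr (by norm_num)
  have ha2 : a ^ 2 = 3 := Real.sq_sqrt (by norm_num)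
  set w : ℂ := u - u0 with hwdef
  have hw : w ≠ 0 := sub_ne_zero.mpr hne
  have hcw : (starRingEnd ℂ) w ≠ 0 := by
    simpa using hw
  have hu0im : u0.im = a / 2 := by
    simp [u0, Complex.div_im, Complex.add_im, Complex.mul_im, ha]
  have him : w.im = u.im - a / 2 := by
    simp [hwdef, hu0im]
  -- u - conj u0 = w + a * I
  have hconj : u - (starRingEnd ℂ) u0 = w + (a:ℂ) * Complex.I := by
    rw [hwdef]
    have : u0 - (starRingEnd ℂ) u0 = (a:ℂ) * Complex.I := by
      apply Complex.ext <;> simp [hu0im]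
    rw [← this]; ring
  set A : ℝ := ‖w‖ with hA
  have hA0 : 0 < A := norm_pos_iff.mpr hw
  set B : ℝ := ‖w + (a:ℂ) * Complex.I‖ with hB
  have hB2 : B ^ 2 = A ^ 2 + 2 * a * u.im := by
    rw [hB, hA, Complex.sq_norm, Complex.sq_norm, Complex.normSq_apply, Complex.normSq_apply]
    simp only [Complex.add_re, Complex.add_im, Complex.mul_re, Complex.mul_im,
      Complex.I_re, Complex.I_im, Complex.ofReal_re, Complex.ofReal_im]
    nlinarith [him, ha2]
  set R : ℝ := B / A with hR
  have hBA : A < B := by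
    have hB2' : A ^ 2 < B ^ 2 := by nlinarith
    nlinarith [norm_nonneg (w + (a:ℂ) * Complex.I)]
  have hR1 : 1 < R := (one_lt_div hA0).mpr hBA
  set z : ℂ := (w + (a:ℂ) * Complex.I) / (starRingEnd ℂ) w with hz
  have hzabs : ‖z‖ = R := by
    rw [hz, norm_div, Complex.norm_conj]
  refine ⟨R, z.arg, hR1, ?_, ?_⟩
  · have hexp : (R:ℂ) * Complex.exp (Complex.I * (z.arg:ℂ)) = z := by
      rw [mul_comm Complex.I, ← hzabs]
      exact Complex.norm_mul_exp_arg_mul_I z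
    rw [hexp]
    -- key: w = a*I*(z-1)/(1-R^2)
    have hsub : w - (starRingEnd ℂ) w = ((2 * u.im - a : ℝ) : ℂ) * Complex.I := by
      apply Complex.ext <;> simp [Complex.sub_im, him] <;> ring
    have hmulconj : w * (starRingEnd ℂ) w = ((A ^ 2 : ℝ) : ℂ) := by
      rw [Complex.mul_conj]
      norm_cast
      rw [hA, Complex.sq_norm]
    have hR2 : ((1:ℂ) - (R:ℂ)^2) = ((-(2 * a * u.im)) : ℝ) / ((A^2 : ℝ) : ℂ) := by
      have h1 : (1:ℝ) - R ^ 2 = -(2 * a * u.im) / A ^ 2 := by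
        have hRsq : R ^ 2 = B ^ 2 / A ^ 2 := by rw [hR]; ring
        rw [hRsq, hB2]
        field_simp
        ring
      rw [show ((1:ℂ) - (R:ℂ)^2) = (((1 - R^2 : ℝ)):ℂ) by push_cast; ring, h1]
      push_cast
      ring
    have hAne : ((A ^ 2 : ℝ) : ℂ) ≠ 0 := by
      exact_mod_cast pow_ne_zero 2 hA0.ne'
    have h2au : ((-(2 * a * u.im) : ℝ) : ℂ) ≠ 0 := by
      have : (2 * a * u.im) ≠ 0 := by positivity
      exact_mod_cast neg_ne_zero.mpr this
    have hz1 : z - 1 = ((2 * u.im : ℝ) : ℂ) * Complex.I / (starRingEnd ℂ) w := by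
      rw [hz, div_sub_one hcw, div_eq_div_iff hcw hcw]
      push_cast
      push_cast at hsub
      linear_combination ((starRingEnd ℂ) w) * hsub
    have haC : ((a:ℝ):ℂ) ≠ 0 := by exact_mod_cast ha0.ne'
    have huimC : ((u.im:ℝ):ℂ) ≠ 0 := by exact_mod_cast hu.ne'
    have hD : (1:ℂ) - (R:ℂ)^2 ≠ 0 := by
      have h0 : (1:ℝ) - R^2 ≠ 0 := by nlinarith
      have : ((1 - R^2 : ℝ):ℂ) ≠ 0 := by exact_mod_cast h0
      simpa [Complex.ofReal_sub, Complex.ofReal_pow] using this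
    have key2 : w * ((1:ℂ) - (R:ℂ)^2) = (a:ℂ) * Complex.I * (z - 1) := by
      rw [hz1, hR2, ← hmulconj]
      field_simp
      push_cast
      linear_combination (-(2 * (a:ℂ) * (u.im:ℂ))) * Complex.I_sq
    have key : w = (a:ℂ) * Complex.I * (z - 1) / (1 - (R:ℂ)^2) := by
      rw [eq_div_iff hD]; exact key2
    rw [← key, hwdef]; ring
  · rw [hR, hconj, hA]
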